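/- Let f : ℝ² → ℝ be a twice continuously differentiable function, and let U be a nonempty open subset of the domain of f on which neither partial derivative f_x nor f_y vanishes. Suppose there exist twice differentiable univariate real functions ψ, φ₁, φ₂ such that f(x,y) = ψ(φ₁(x) + φ₂(y)) for all (x,y) ∈ U. Then the mixed second partial derivative ∂²(ln|f_x/f_y|)/∂x∂y is identically zero on U. -/

import Mathlib

theorem stmt1 (f : ℝ × ℝ → ℝ) (hf : ContDiff ℝ 2 f)
    (U : Set (ℝ × ℝ)) (hU : IsOpen U) (hne : U.Nonempty)
    (hfx : ∀ p ∈ U, deriv (fun x => f (x, p.2)) p.1 ≠ 0)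
    (hfy : ∀ p ∈ U, deriv (fun y => f (p.1, y)) p.2 ≠ 0)
    (ψ φ₁ φ₂ : ℝ → ℝ) (hψ : ContDiff ℝ 2 ψ) (hφ₁ : ContDiff ℝ 2 φ₁)
    (hφ₂ : ContDiff ℝ 2 φ₂)
    (hrep : ∀ p ∈ U, f p = ψ (φ₁ p.1 + φ₂ p.2)) :
    ∀ p ∈ U,
      deriv (fun y =>
        deriv (fun x =>
          Real.log |deriv (fun x' => f (x', y)) x / deriv (fun y' => f (x, y')) y|)
          p.1) p.2 = 0 := by
  have hψd : Differentiable ℝ ψ := hψ.differentiable two_ne_zero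
  have hφ₁d : Differentiable ℝ φ₁ := hφ₁.differentiable two_ne_zero
  have hφ₂d : Differentiable ℝ φ₂ := hφ₂.differentiable two_ne_zero
  intro p hp
  obtain ⟨u, v, hu, hv, hpu, hpv, huv⟩ := isOpen_prod_iff.mp hU p.1 p.2 hp
  have hmem : ∀ x ∈ u, ∀ y ∈ v, (x, y) ∈ U := fun x hx y hy => huv (Set.mk_mem_prod hx hy)
  have hdx : ∀ x ∈ u, ∀ y ∈ v, deriv (fun x' => f (x', y)) x
      = deriv ψ (φ₁ x + φ₂ y) * deriv φ₁ x := by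
    intro x hx y hy
    have h1 : (fun x' => f (x', y)) =ᶠ[nhds x] fun x' => ψ (φ₁ x' + φ₂ y) := by
      filter_upwards [hu.mem_nhds hx] with x' hx'
      exact hrep (x', y) (hmem x' hx' y hy)
    rw [h1.deriv_eq]
    exact ((hψd _).hasDerivAt.comp x ((hφ₁d x).hasDerivAt.add_const _)).deriv
  have hdy : ∀ x ∈ u, ∀ y ∈ v, deriv (fun y' => f (x, y')) y
      = deriv ψ (φ₁ x + φ₂ y) * deriv φ₂ y := by
    intro x hx y hy
    have h1 : (fun y' => f (x, y')) =ᶠ[nhds y] fun y' => ψ (φ₁ x + φ₂ y') := by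
      filter_upwards [hv.mem_nhds hy] with y' hy'
      exact hrep (x, y') (hmem x hx y' hy')
    rw [h1.deriv_eq]
    exact ((hψd _).hasDerivAt.comp y ((hφ₂d y).hasDerivAt.const_add _)).deriv
  have hlog : ∀ x ∈ u, ∀ y ∈ v,
      Real.log |deriv (fun x' => f (x', y)) x / deriv (fun y' => f (x, y')) y|
      = Real.log |deriv φ₁ x| - Real.log |deriv φ₂ y| := by
    intro x hx y hy
    have hx0 : deriv ψ (φ₁ x + φ₂ y) * deriv φ₁ x ≠ 0 := by
      rw [← hdx x hx y hy]; exact hfx (x, y) (hmem x hx y hy)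
    have hy0 : deriv ψ (φ₁ x + φ₂ y) * deriv φ₂ y ≠ 0 := by
      rw [← hdy x hx y hy]; exact hfy (x, y) (hmem x hx y hy)
    have hψ0 : deriv ψ (φ₁ x + φ₂ y) ≠ 0 := (mul_ne_zero_iff.mp hx0).1
    have h1 : deriv φ₁ x ≠ 0 := (mul_ne_zero_iff.mp hx0).2
    have h2 : deriv φ₂ y ≠ 0 := (mul_ne_zero_iff.mp hy0).2
    rw [hdx x hx y hy, hdy x hx y hy, mul_div_mul_left _ _ hψ0, abs_div,
      Real.log_div (abs_ne_zero.2 h1) (abs_ne_zero.2 h2)]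
  have hinner : ∀ y ∈ v,
      deriv (fun x => Real.log |deriv (fun x' => f (x', y)) x
        / deriv (fun y' => f (x, y')) y|) p.1
      = deriv (fun x => Real.log |deriv φ₁ x|) p.1 := by
    intro y hy
    have h1 : (fun x => Real.log |deriv (fun x' => f (x', y)) x
        / deriv (fun y' => f (x, y')) y|)
        =ᶠ[nhds p.1] fun x => Real.log |deriv φ₁ x| - Real.log |deriv φ₂ y| := by
      filter_upwards [hu.mem_nhds hpu] with x hx
      exact hlog x hx y hy
    rw [h1.deriv_eq, deriv_sub_const]
  have h2 : (fun y => deriv (fun x => Real.log |deriv (fun x' => f (x', y)) x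
      / deriv (fun y' => f (x, y')) y|) p.1)
      =ᶠ[nhds p.2] fun _ => deriv (fun x => Real.log |deriv φ₁ x|) p.1 := by
    filter_upwards [hv.mem_nhds hpv] with y hy using hinner y hy
  rw [h2.deriv_eq, deriv_const]
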